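/- For every n ≥ 6, the reverse permutation R_n can be transformed into the arrangement A_n in exactly 2n−6 LRE moves when n is even, and in exactly 2n−8 LRE moves when n is odd; that is, there exist that many generators g_1, g_2, … ∈ G with R_n ∘ g_1 ∘ ⋯ = A_n. -/

import Mathlib

/-- Helper: reduce a mod by a variable when the argument is `< 2*n`. -/
theorem mod_small' (a n : ℕ) (h : a < 2 * n) (hn : 0 < n) :
    a % n = if a < n then a else a - n := by
  split_ifs with h1
  · exact Nat.mod_eq_of_lt h1
  · rw [Nat.mod_eq_sub_mod (by omega)]
    exact Nat.mod_eq_of_lt (by omega)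

/-- action of `(σ*τ)^k` on value `x`, for `k ≤ n-1`. -/
def MAct (n k x : ℕ) : ℕ :=
  if x = 1 then 1
  else if (if x = 0 then 0 else x - 1) + k ≤ n - 2 then
    (if (if x = 0 then 0 else x - 1) + k = 0 then 0
     else (if x = 0 then 0 else x - 1) + k + 1)
  else
    (if (if x = 0 then 0 else x - 1) + k - (n - 1) = 0 then 0
     else (if x = 0 then 0 else x - 1) + k - (n - 1) + 1)

/-- action of `(σ⁻¹*τ)^k` on value `x`, for `k ≤ n-1`. -/
def NAct (n k x : ℕ) : ℕ :=
  if x = 0 then 0 else if k < x then x - k else x + (n - 1) - k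

section Aux
variable {n : ℕ} (hn : 6 ≤ n) (σ τ : Equiv.Perm (Fin n))
  (hσ : ∀ i : Fin n, (σ i : ℕ) = ((i : ℕ) + 1) % n)
  (hτ : ∀ i : Fin n, (τ i : ℕ) =
      if (i : ℕ) = 0 then 1 else if (i : ℕ) = 1 then 0 else (i : ℕ))

include hσ in
theorem sigma_inv_apply (j : Fin n) :
    ((σ⁻¹ j : Fin n) : ℕ) = if (j : ℕ) = 0 then n - 1 else (j : ℕ) - 1 := by
  have h := hσ (σ⁻¹ j)
  rw [show σ (σ⁻¹ j) = j from σ.apply_symm_apply j] at h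
  have h1 := (σ⁻¹ j).isLt
  have h2 := j.isLt
  rw [mod_small' _ n (by omega) (by omega)] at h
  split_ifs at h ⊢ <;> first | omega | (exfalso; assumption)

include hn hσ hτ in
theorem Mapp (i : Fin n) :
    (((σ * τ) i : Fin n) : ℕ) =
      if (i : ℕ) = 1 then 1 else if (i : ℕ) = 0 then 2
      else if (i : ℕ) = n - 1 then 0 else (i : ℕ) + 1 := by
  rw [Equiv.Perm.mul_apply, hσ, mod_small' _ n (by have := (τ i).isLt; omega) (by omega), hτ]
  have := i.isLt
  split_ifs <;> first | omega | (exfalso; assumption)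

include hn hσ hτ in
theorem Napp (i : Fin n) :
    (((σ⁻¹ * τ) i : Fin n) : ℕ) =
      if (i : ℕ) = 0 then 0 else if (i : ℕ) = 1 then n - 1 else (i : ℕ) - 1 := by
  rw [Equiv.Perm.mul_apply, sigma_inv_apply σ hσ, hτ]
  have := i.isLt
  split_ifs <;> first | omega | (exfalso; assumption)

include hn hσ hτ in
theorem Mpow : ∀ k, k ≤ n - 1 → ∀ i : Fin n,
    ((((σ * τ) ^ k) i : Fin n) : ℕ) = MAct n k (i : ℕ) := by
  intro k
  induction k with
  | zero =>
    intro _ i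
    rw [pow_zero, Equiv.Perm.one_apply]
    have := i.isLt
    unfold MAct
    split_ifs <;> first | omega | (exfalso; assumption)
  | succ k ih =>
    intro hk i
    rw [pow_succ, Equiv.Perm.mul_apply, ih (by omega), Mapp hn σ τ hσ hτ]
    have := i.isLt
    unfold MAct
    split_ifs <;> first | omega | (exfalso; assumption)

include hn hσ hτ in
theorem Npow : ∀ k, k ≤ n - 1 → ∀ i : Fin n,
    ((((σ⁻¹ * τ) ^ k) i : Fin n) : ℕ) = NAct n k (i : ℕ) := by
  intro k
  induction k with
  | zero =>
    intro _ i
    rw [pow_zero, Equiv.Perm.one_apply]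
    have := i.isLt
    unfold NAct
    split_ifs <;> first | omega | (exfalso; assumption)
  | succ k ih =>
    intro hk i
    rw [pow_succ, Equiv.Perm.mul_apply, ih (by omega), Napp hn σ τ hσ hτ]
    have := i.isLt
    unfold NAct
    split_ifs <;> first | omega | (exfalso; assumption)

end Aux


/-- `rep2 a b k = [a, b, a, b, …]` with `k` copies of `[a, b]`. -/
def rep2 {G : Type*} (a b : G) : ℕ → List G
  | 0 => []
  | k + 1 => a :: b :: rep2 a b k

theorem rep2_length {G : Type*} (a b : G) (k : ℕ) : (rep2 a b k).length = 2 * k := by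
  induction k with
  | zero => rfl
  | succ k ih => simp [rep2, ih]; omega

theorem rep2_mem {G : Type*} (a b : G) (k : ℕ) (g : G) (hg : g ∈ rep2 a b k) :
    g = a ∨ g = b := by
  induction k with
  | zero => simp [rep2] at hg
  | succ k ih =>
    simp only [rep2, List.mem_cons] at hg
    rcases hg with rfl | rfl | h
    · tauto
    · tauto
    · exact ih h

theorem rep2_prod {G : Type*} [Monoid G] (a b : G) (k : ℕ) :
    (rep2 a b k).prod = (a * b) ^ k := by
  induction k with
  | zero => simp [rep2]
  | succ k ih => rw [rep2, List.prod_cons, List.prod_cons, ih, pow_succ', mul_assoc]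

theorem reverse_to_A (n : ℕ) (hn : 6 ≤ n)
    (σ τ R A : Equiv.Perm (Fin n))
    (hσ : ∀ i : Fin n, (σ i : ℕ) = ((i : ℕ) + 1) % n)
    (hτ : ∀ i : Fin n, (τ i : ℕ) =
      if (i : ℕ) = 0 then 1 else if (i : ℕ) = 1 then 0 else (i : ℕ))
    (hR : ∀ i : Fin n, (R i : ℕ) = n - 1 - (i : ℕ))
    (hA : ∀ i : Fin n, (A i : ℕ) =
      if (i : ℕ) = n - (n + 1) / 2 - 2 then n - 1
      else if (i : ℕ) = n - 1 then (n + 1) / 2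
      else n - 2 - (i : ℕ)) :
    ∃ gs : List (Equiv.Perm (Fin n)),
      (n % 2 = 0 → gs.length = 2 * n - 6) ∧
      (n % 2 = 1 → gs.length = 2 * n - 8) ∧
      (∀ g ∈ gs, g = σ ∨ g = σ⁻¹ ∨ g = τ) ∧
      R * gs.prod = A := by
  set p : ℕ := n - (n + 1) / 2 - 2 with hp
  have hq1 : (n + 1) / 2 = n - p - 2 := by omega
  have hq2 : 2 * p + 4 ≤ n := by omega
  have hq3 : n ≤ 2 * p + 5 := by omega
  clear_value p
  clear hp
  refine ⟨τ :: (rep2 σ τ p ++ rep2 σ⁻¹ τ p ++ [σ]), ?_, ?_, ?_, ?_⟩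
  · intro hpar
    simp [List.length_append, rep2_length]
    omega
  · intro hpar
    simp [List.length_append, rep2_length]
    omega
  · intro g hg
    rcases List.mem_cons.mp hg with rfl | hg'
    · tauto
    rcases List.mem_append.mp hg' with h | h
    · rcases List.mem_append.mp h with h1 | h1
      · rcases rep2_mem _ _ _ _ h1 with rfl | rfl <;> tauto
      · rcases rep2_mem _ _ _ _ h1 with rfl | rfl <;> tauto
    · simp only [List.mem_singleton] at h
      tauto
  · have hprod : (τ :: (rep2 σ τ p ++ rep2 σ⁻¹ τ p ++ [σ])).prod
        = τ * ((σ * τ) ^ p * ((σ⁻¹ * τ) ^ p * σ)) := by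
      rw [List.prod_cons, List.prod_append, List.prod_append, rep2_prod, rep2_prod]
      simp [mul_assoc]
    rw [hprod]
    have hple : p ≤ n - 1 := by omega
    ext i
    have hi := i.isLt
    set x : ℕ := (i : ℕ) with hx
    obtain hc | hc | hc | hc | hc : x = n - 1 ∨ x = p ∨ x = 0 ∨
        (1 ≤ x ∧ x < p) ∨ (p < x ∧ x ≤ n - 2) := by omega
    · have h1 : ((σ i : Fin n) : ℕ) = 0 := by
        rw [hσ, mod_small' _ n (by omega) (by omega)]
        split_ifs <;> first | omega | (exfalso; assumption)
      have h2 : ((((σ⁻¹ * τ) ^ p) (σ i) : Fin n) : ℕ) = 0 := by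
        rw [Npow hn σ τ hσ hτ p hple, h1]
        unfold NAct
        split_ifs <;> first | omega | (exfalso; assumption)
      have h3 : ((((σ * τ) ^ p) (((σ⁻¹ * τ) ^ p) (σ i)) : Fin n) : ℕ) = p + 1 := by
        rw [Mpow hn σ τ hσ hτ p hple, h2]
        unfold MAct
        split_ifs <;> first | omega | (exfalso; assumption)
      have h4 : ((τ (((σ * τ) ^ p) (((σ⁻¹ * τ) ^ p) (σ i))) : Fin n) : ℕ) = p + 1 := by
        rw [hτ, h3]
        split_ifs <;> first | omega | (exfalso; assumption)
      rw [Equiv.Perm.mul_apply, Equiv.Perm.mul_apply, Equiv.Perm.mul_apply,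
        Equiv.Perm.mul_apply, hR, h4, hA]
      split_ifs <;> first | omega | (exfalso; assumption)
    · have h1 : ((σ i : Fin n) : ℕ) = p + 1 := by
        rw [hσ, mod_small' _ n (by omega) (by omega)]
        split_ifs <;> first | omega | (exfalso; assumption)
      have h2 : ((((σ⁻¹ * τ) ^ p) (σ i) : Fin n) : ℕ) = 1 := by
        rw [Npow hn σ τ hσ hτ p hple, h1]
        unfold NAct
        split_ifs <;> first | omega | (exfalso; assumption)
      have h3 : ((((σ * τ) ^ p) (((σ⁻¹ * τ) ^ p) (σ i)) : Fin n) : ℕ) = 1 := by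
        rw [Mpow hn σ τ hσ hτ p hple, h2]
        unfold MAct
        split_ifs <;> first | omega | (exfalso; assumption)
      have h4 : ((τ (((σ * τ) ^ p) (((σ⁻¹ * τ) ^ p) (σ i))) : Fin n) : ℕ) = 0 := by
        rw [hτ, h3]
        split_ifs <;> first | omega | (exfalso; assumption)
      rw [Equiv.Perm.mul_apply, Equiv.Perm.mul_apply, Equiv.Perm.mul_apply,
        Equiv.Perm.mul_apply, hR, h4, hA]
      split_ifs <;> first | omega | (exfalso; assumption)
    · have h1 : ((σ i : Fin n) : ℕ) = 1 := by
        rw [hσ, mod_small' _ n (by omega) (by omega)]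
        split_ifs <;> first | omega | (exfalso; assumption)
      have h2 : ((((σ⁻¹ * τ) ^ p) (σ i) : Fin n) : ℕ) = n - p := by
        rw [Npow hn σ τ hσ hτ p hple, h1]
        unfold NAct
        split_ifs <;> first | omega | (exfalso; assumption)
      have h3 : ((((σ * τ) ^ p) (((σ⁻¹ * τ) ^ p) (σ i)) : Fin n) : ℕ) = 0 := by
        rw [Mpow hn σ τ hσ hτ p hple, h2]
        unfold MAct
        split_ifs <;> first | omega | (exfalso; assumption)
      have h4 : ((τ (((σ * τ) ^ p) (((σ⁻¹ * τ) ^ p) (σ i))) : Fin n) : ℕ) = 1 := by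
        rw [hτ, h3]
        split_ifs <;> first | omega | (exfalso; assumption)
      rw [Equiv.Perm.mul_apply, Equiv.Perm.mul_apply, Equiv.Perm.mul_apply,
        Equiv.Perm.mul_apply, hR, h4, hA]
      split_ifs <;> first | omega | (exfalso; assumption)
    · have h1 : ((σ i : Fin n) : ℕ) = x + 1 := by
        rw [hσ, mod_small' _ n (by omega) (by omega)]
        split_ifs <;> first | omega | (exfalso; assumption)
      have h2 : ((((σ⁻¹ * τ) ^ p) (σ i) : Fin n) : ℕ) = x + n - p := by
        rw [Npow hn σ τ hσ hτ p hple, h1]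
        unfold NAct
        split_ifs <;> first | omega | (exfalso; assumption)
      have h3 : ((((σ * τ) ^ p) (((σ⁻¹ * τ) ^ p) (σ i)) : Fin n) : ℕ) = x + 1 := by
        rw [Mpow hn σ τ hσ hτ p hple, h2]
        unfold MAct
        split_ifs <;> first | omega | (exfalso; assumption)
      have h4 : ((τ (((σ * τ) ^ p) (((σ⁻¹ * τ) ^ p) (σ i))) : Fin n) : ℕ) = x + 1 := by
        rw [hτ, h3]
        split_ifs <;> first | omega | (exfalso; assumption)
      rw [Equiv.Perm.mul_apply, Equiv.Perm.mul_apply, Equiv.Perm.mul_apply,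
        Equiv.Perm.mul_apply, hR, h4, hA]
      split_ifs <;> first | omega | (exfalso; assumption)
    · have h1 : ((σ i : Fin n) : ℕ) = x + 1 := by
        rw [hσ, mod_small' _ n (by omega) (by omega)]
        split_ifs <;> first | omega | (exfalso; assumption)
      have h2 : ((((σ⁻¹ * τ) ^ p) (σ i) : Fin n) : ℕ) = x + 1 - p := by
        rw [Npow hn σ τ hσ hτ p hple, h1]
        unfold NAct
        split_ifs <;> first | omega | (exfalso; assumption)
      have h3 : ((((σ * τ) ^ p) (((σ⁻¹ * τ) ^ p) (σ i)) : Fin n) : ℕ) = x + 1 := by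
        rw [Mpow hn σ τ hσ hτ p hple, h2]
        unfold MAct
        split_ifs <;> first | omega | (exfalso; assumption)
      have h4 : ((τ (((σ * τ) ^ p) (((σ⁻¹ * τ) ^ p) (σ i))) : Fin n) : ℕ) = x + 1 := by
        rw [hτ, h3]
        split_ifs <;> first | omega | (exfalso; assumption)
      rw [Equiv.Perm.mul_apply, Equiv.Perm.mul_apply, Equiv.Perm.mul_apply,
        Equiv.Perm.mul_apply, hR, h4, hA]
      split_ifs <;> first | omega | (exfalso; assumption)
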